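/- Let N ≥ 1 and 0 ≤ u, v < 2^{2^{N−1}}, and write B_{uv}^{(N)}(z) = ∑_{k=0}^{2^N−1} b_k z^k. If u = 0, then b_0 = 2^{N−1} − b_1 and b_{2j} = −b_{2j+1} for all 1 ≤ j ≤ 2^{N−1} − 1. If v = 0, then b_{2j+1} = 0 for all 0 ≤ j ≤ 2^{N−1} − 1. -/
import Mathlib

/-- `bitd n i` is the `i`-th binary digit of `n` (0 or 1). -/
def bitd (n i : ℕ) : ℕ := if n.testBit i then 1 else 0

/-- The polynomial `s_k^{(N)}(z) = ∏_{i=0}^{N-2} (1 + (-1)^{k_i} z^{2^{i+1}})`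
(the empty product, for `N = 1`, being `1`). -/
noncomputable def sPoly (N k : ℕ) : Polynomial ℤ :=
  ∏ i ∈ Finset.range (N - 1),
    (1 + Polynomial.C ((-1 : ℤ) ^ bitd k i) * Polynomial.X ^ (2 ^ (i + 1)))

/-- The Bell polynomial `B_{uv}^{(N)}(z) = ∑_{k<2^{N-1}} (-1)^{u_k} z^{v_k} s_k^{(N)}(z)`. -/
noncomputable def BPoly (N u v : ℕ) : Polynomial ℤ :=
  ∑ k ∈ Finset.range (2 ^ (N - 1)),
    Polynomial.C ((-1 : ℤ) ^ bitd u k) * Polynomial.X ^ bitd v k * sPoly N k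

open Polynomial in
lemma sPoly_expand (N k : ℕ) :
    sPoly N k = Polynomial.expand ℤ 2
      (∏ i ∈ Finset.range (N - 1),
        (1 + Polynomial.C ((-1 : ℤ) ^ bitd k i) * Polynomial.X ^ (2 ^ i))) := by
  rw [map_prod]
  refine Finset.prod_congr rfl fun i _ => ?_
  rw [map_add, map_mul, map_one, Polynomial.expand_C]
  congr 1
  congr 1
  rw [map_pow, Polynomial.expand_X, ← pow_mul, show 2 * 2 ^ i = 2 ^ (i + 1) from by ring]

lemma sPoly_coeff_odd (N k n : ℕ) (hn : ¬ 2 ∣ n) : (sPoly N k).coeff n = 0 := by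
  rw [sPoly_expand, Polynomial.coeff_expand (by norm_num), if_neg hn]

/-- Generic "sum over bit strings" product formula. -/
lemma sum_bits (m : ℕ) (g : ℕ → ℕ → Polynomial ℤ) :
    ∑ k ∈ Finset.range (2 ^ m), ∏ i ∈ Finset.range m, g (bitd k i) i =
      ∏ i ∈ Finset.range m, (g 0 i + g 1 i) := by
  induction m with
  | zero => simp
  | succ m ih =>
    have h2 : 2 ^ (m + 1) = 2 ^ m + 2 ^ m := by ring
    rw [h2, Finset.sum_range_add]
    have h1 : ∀ k ∈ Finset.range (2 ^ m),
        ∏ i ∈ Finset.range (m + 1), g (bitd k i) i =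
          (∏ i ∈ Finset.range m, g (bitd k i) i) * g 0 m := by
      intro k hk
      rw [Finset.prod_range_succ]
      congr 1
      simp [bitd, Nat.testBit_lt_two_pow (Finset.mem_range.mp hk)]
    have h1' : ∀ k ∈ Finset.range (2 ^ m),
        ∏ i ∈ Finset.range (m + 1), g (bitd (2 ^ m + k) i) i =
          (∏ i ∈ Finset.range m, g (bitd k i) i) * g 1 m := by
      intro k hk
      rw [Finset.prod_range_succ]
      congr 1
      · refine Finset.prod_congr rfl fun i hi => ?_
        rw [show bitd (2 ^ m + k) i = bitd k i by
          simp [bitd, Nat.testBit_two_pow_add_gt (Finset.mem_range.mp hi) k]]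
      · simp [bitd, Nat.testBit_two_pow_add_eq,
          Nat.testBit_lt_two_pow (Finset.mem_range.mp hk)]
    rw [Finset.sum_congr rfl h1, Finset.sum_congr rfl h1',
      ← Finset.sum_mul, ← Finset.sum_mul, ← mul_add, ih, Finset.prod_range_succ]

lemma sum_sPoly (N : ℕ) :
    ∑ k ∈ Finset.range (2 ^ (N - 1)), sPoly N k =
      Polynomial.C ((2 : ℤ) ^ (N - 1)) := by
  have := sum_bits (N - 1)
    (fun b i => 1 + Polynomial.C ((-1 : ℤ) ^ b) * Polynomial.X ^ (2 ^ (i + 1)))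
  simp only [sPoly]
  rw [this]
  have : ∀ i ∈ Finset.range (N - 1),
      ((1 + Polynomial.C ((-1 : ℤ) ^ 0) * Polynomial.X ^ (2 ^ (i + 1))) +
       (1 + Polynomial.C ((-1 : ℤ) ^ 1) * Polynomial.X ^ (2 ^ (i + 1)))) =
        Polynomial.C (2 : ℤ) := by
    intro i _
    simp; ring
  rw [Finset.prod_congr rfl this, Finset.prod_const, Finset.card_range, ← map_pow]

lemma key_sum (N v j : ℕ) :
    (BPoly N 0 v).coeff (2 * j) + (BPoly N 0 v).coeff (2 * j + 1) =
      (Polynomial.C ((2 : ℤ) ^ (N - 1))).coeff (2 * j) := by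
  rw [← sum_sPoly, BPoly, Polynomial.finset_sum_coeff, Polynomial.finset_sum_coeff,
    Polynomial.finset_sum_coeff, ← Finset.sum_add_distrib]
  refine Finset.sum_congr rfl fun k _ => ?_
  have hb : bitd 0 k = 0 := by simp [bitd]
  rw [hb]
  simp only [pow_zero, map_one, one_mul]
  rcases (by rcases Nat.testBit v k <;> simp [bitd] :
      bitd v k = 0 ∨ bitd v k = 1) with h | h <;> rw [h]
  · rw [pow_zero, one_mul]
    have : (sPoly N k).coeff (2 * j + 1) = 0 :=
      sPoly_coeff_odd N k _ (by omega)
    rw [this, add_zero]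
  · rw [pow_one]
    rcases Nat.eq_zero_or_pos j with hj | hj
    · subst hj
      simp [Polynomial.coeff_X_mul]
    · have h2j : 2 * j = (2 * j - 1) + 1 := by omega
      rw [h2j, Polynomial.coeff_X_mul, Polynomial.coeff_X_mul]
      have : (sPoly N k).coeff (2 * j - 1) = 0 :=
        sPoly_coeff_odd N k _ (by omega)
      rw [this, zero_add]

/-- For `N ≥ 1`, `u, v < 2^{2^{N-1}}`, write `b_k` for the coefficients
of `B_{uv}^{(N)}`. If `u = 0` then `b_0 = 2^{N-1} - b_1` and `b_{2j} = -b_{2j+1}` for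
`1 ≤ j ≤ 2^{N-1} - 1`; if `v = 0` then `b_{2j+1} = 0` for `0 ≤ j ≤ 2^{N-1} - 1`. -/
theorem stmt15 (N u v : ℕ) (hN : 1 ≤ N)
    (hu : u < 2 ^ 2 ^ (N - 1)) (hv : v < 2 ^ 2 ^ (N - 1)) :
    (u = 0 →
      (BPoly N u v).coeff 0 = 2 ^ (N - 1) - (BPoly N u v).coeff 1 ∧
      ∀ j, 1 ≤ j → j ≤ 2 ^ (N - 1) - 1 →
        (BPoly N u v).coeff (2 * j) = -(BPoly N u v).coeff (2 * j + 1)) ∧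
    (v = 0 → ∀ j ≤ 2 ^ (N - 1) - 1, (BPoly N u v).coeff (2 * j + 1) = 0) := by
  constructor
  · rintro rfl
    constructor
    · have := key_sum N v 0
      simp only [Nat.mul_zero, Polynomial.coeff_C_zero] at this
      linarith
    · intro j hj _
      have := key_sum N v j
      rw [Polynomial.coeff_C, if_neg (by omega)] at this
      linarith
  · rintro rfl j _
    rw [BPoly, Polynomial.finset_sum_coeff]
    refine Finset.sum_eq_zero fun k _ => ?_
    have hb : bitd 0 k = 0 := by simp [bitd]
    rw [hb, pow_zero, mul_one, Polynomial.coeff_C_mul,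
      sPoly_coeff_odd N k _ (by omega), mul_zero]
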